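/- Reverse martingale property: under (D1)–(D4) and (A1)–(A2), for the process T₀(α) = Σ_{m∈𝓜₀} δ_m(A_m(α))/A_m(α) and the decreasing filtration 𝓕_α = σ(δ_m(A_m(β)) : β ∈ [α,1], m ∈ 𝓜), one has, for every 0 < α ≤ β ≤ 1, E_P[T₀(α) | 𝓕_β] = T₀(β) almost surely; i.e., {(T₀(α), 𝓕_α) : α ∈ (0,1]} is a reverse martingale under P. Moreover T₀(1) = |𝓜₀| a.e.-P, so E_P[T₀(1)] = |𝓜₀|. -/

import Mathlib

/-!
Statement 13: Reverse martingale property. Under (D1)–(D4) and (A1)–(A2), the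
process T₀(α) = Σ_{m∈𝓜₀} δ_m(A_m(α))/A_m(α) with the decreasing filtration
𝓕_α = σ(δ_m(A_m(β)) : β ∈ [α,1], m ∈ 𝓜) satisfies, for 0 < α ≤ β ≤ 1,
E_P[T₀(α) | 𝓕_β] = T₀(β) a.s.; moreover T₀(1) = |𝓜₀| a.e. so E_P[T₀(1)] = |𝓜₀|.
-/

open MeasureTheory ProbabilityTheory Function Set

noncomputable section

/-- The reverse-martingale process `T₀(α) = ∑_{m∈𝓜₀} δ_m(A_m(α))/A_m(α)`. -/
def Tzero {X ι : Type*} (M0 : Finset ι) (A : ι → ℝ → ℝ)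
    (δ : ι → ℝ → X → ℝ) (α : ℝ) (x : X) : ℝ :=
  ∑ m ∈ M0, δ m (A m α) x / A m α

/-- The (decreasing) filtration `𝓕_α = σ(δ_m(A_m(β)) : β ∈ [α,1], m ∈ 𝓜)`. -/
def filt {X ι : Type*} (A : ι → ℝ → ℝ) (δ : ι → ℝ → X → ℝ) (α : ℝ) :
    MeasurableSpace X :=
  ⨆ m, ⨆ β ∈ Set.Icc α 1, MeasurableSpace.comap (δ m (A m β)) Real.measurableSpace

/-- The σ-algebra generated by the decision process `α ↦ δ_m(α)`, `α ∈ [0,1]`. -/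
def procSigma {X : Type*} (δm : ℝ → X → ℝ) : MeasurableSpace X :=
  ⨆ α ∈ Set.Icc (0:ℝ) 1, MeasurableSpace.comap (δm α) Real.measurableSpace

section Aux

variable {X ι : Type*} {mX : MeasurableSpace X}

lemma procSigma_le {δm : ℝ → X → ℝ} (h : ∀ c ∈ Set.Icc (0:ℝ) 1, Measurable (δm c)) :
    procSigma δm ≤ mX :=
  iSup₂_le fun c hc => measurable_iff_comap_le.mp (h c hc)

lemma comap_le_procSigma (δm : ℝ → X → ℝ) {c : ℝ} (hc : c ∈ Set.Icc (0:ℝ) 1) :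
    MeasurableSpace.comap (δm c) Real.measurableSpace ≤ procSigma δm :=
  le_iSup₂ (f := fun (c : ℝ) (_ : c ∈ Set.Icc (0:ℝ) 1) =>
    MeasurableSpace.comap (δm c) Real.measurableSpace) c hc

lemma mem_procSigma {δm : ℝ → X → ℝ} {c : ℝ} (hc : c ∈ Set.Icc (0:ℝ) 1) {B : Set ℝ}
    (hB : MeasurableSet B) : MeasurableSet[procSigma δm] (δm c ⁻¹' B) :=
  comap_le_procSigma δm hc _ ⟨B, hB, rfl⟩

end Aux

/-- **Reverse martingale property of `T₀`.** -/
theorem Tzero_reverse_martingale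
    {X ι : Type*} [MeasurableSpace X] [Fintype ι] [DecidableEq ι] [Nonempty ι]
    (P : Measure X) [IsProbabilityMeasure P]
    (M0 M1 : Finset ι) (hpart : M0 ∪ M1 = Finset.univ) (hdisj : Disjoint M0 M1)
    (δ : ι → ℝ → X → ℝ) (A : ι → ℝ → ℝ)
    (hmeas : ∀ m, ∀ α ∈ Set.Icc (0:ℝ) 1, Measurable (δ m α))
    (hvals : ∀ m, ∀ α ∈ Set.Icc (0:ℝ) 1, ∀ x, δ m α x = 0 ∨ δ m α x = 1)
    -- (D1)
    (hD1 : ∀ m, ∀ᵐ x ∂P, δ m 0 x = 0 ∧ δ m 1 x = 1)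
    -- (D2)
    (hD2 : ∀ᵐ x ∂P, ∀ m, MonotoneOn (fun α => δ m α x) (Set.Icc 0 1) ∧
      ∀ α ∈ Set.Ico (0:ℝ) 1, ContinuousWithinAt (fun β => δ m β x) (Set.Ici α) α)
    -- (D3)
    (hD3a : Indep (⨆ m ∈ M0, procSigma (δ m)) (⨆ m ∈ M1, procSigma (δ m)) P)
    (hD3b : iIndep (fun m : {m // m ∈ M0} => procSigma (δ (m : ι))) P)
    -- (D4)
    (hD4 : ∀ m ∈ M0, ∀ α ∈ Set.Icc (0:ℝ) 1, ∫ x, δ m α x ∂P = α)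
    -- (A1)–(A2)
    (hArange : ∀ m, ∀ α ∈ Set.Icc (0:ℝ) 1, A m α ∈ Set.Icc (0:ℝ) 1)
    (hA1 : ∀ m, A m 0 = 0 ∧ A m 1 = 1)
    (hA2 : ∀ m, ContinuousOn (A m) (Set.Icc 0 1) ∧ StrictMonoOn (A m) (Set.Icc 0 1)) :
    -- the reverse martingale property
    (∀ α β : ℝ, 0 < α → α ≤ β → β ≤ 1 →
      P[Tzero M0 A δ α|filt A δ β] =ᵐ[P] Tzero M0 A δ β) ∧
    -- terminal value
    (∀ᵐ x ∂P, Tzero M0 A δ 1 x = M0.card) ∧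
    ∫ x, Tzero M0 A δ 1 x ∂P = M0.card := by
  classical
  have h01 : (1:ℝ) ∈ Set.Icc (0:ℝ) 1 := ⟨zero_le_one, le_rfl⟩
  -- integrability of each decision variable
  have hInt : ∀ m, ∀ c ∈ Set.Icc (0:ℝ) 1, Integrable (δ m c) P := by
    intro m c hc
    refine Integrable.mono' (integrable_const (1:ℝ)) (hmeas m c hc).aestronglyMeasurable ?_
    refine Filter.Eventually.of_forall fun x => ?_
    rcases hvals m c hc x with h | h <;> simp [h]
  -- integrability of Tzero
  have hTint : ∀ γ, 0 < γ → γ ≤ 1 → Integrable (Tzero M0 A δ γ) P := by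
    intro γ h0 h1
    have : Integrable (fun x => ∑ m ∈ M0, δ m (A m γ) x / A m γ) P :=
      integrable_finset_sum _ fun m _ => (hInt m (A m γ) (hArange m γ ⟨h0.le, h1⟩)).div_const _
    exact this
  -- terminal value a.e.
  have part2 : ∀ᵐ x ∂P, Tzero M0 A δ 1 x = M0.card := by
    have h := ae_all_iff.mpr hD1
    filter_upwards [h] with x hx
    have : ∀ m ∈ M0, δ m (A m 1) x / A m 1 = 1 := by
      intro m _
      rw [(hA1 m).2, (hx m).2]
      norm_num
    rw [Tzero, Finset.sum_congr rfl this, Finset.sum_const, nsmul_eq_mul, mul_one]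
  have part3 : ∫ x, Tzero M0 A δ 1 x ∂P = M0.card := by
    rw [integral_congr_ae part2, integral_const, measureReal_def, measure_univ, ENNReal.toReal_one, one_smul]
  refine ⟨?_, part2, part3⟩
  -- a.e. monotonicity in threshold form
  have hmono : ∀ᵐ x ∂P, ∀ m, ∀ c ∈ Set.Icc (0:ℝ) 1, ∀ d ∈ Set.Icc (0:ℝ) 1, c ≤ d →
      δ m c x = 1 → δ m d x = 1 := by
    filter_upwards [hD2] with x hx m c hc d hd hcd h1
    have hle : δ m c x ≤ δ m d x := (hx m).1 hc hd hcd
    rw [h1] at hle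
    rcases hvals m d hd x with h | h
    · rw [h] at hle; linarith
    · exact h
  -- the indicator sets
  set E : ι → ℝ → Set X := fun m c => δ m c ⁻¹' {1} with hE
  have hEmeas : ∀ m, ∀ c ∈ Set.Icc (0:ℝ) 1, MeasurableSet (E m c) := fun m c hc =>
    (hmeas m c hc) (measurableSet_singleton 1)
  have hind : ∀ m, ∀ c ∈ Set.Icc (0:ℝ) 1, δ m c = (E m c).indicator (1 : X → ℝ) := by
    intro m c hc
    funext x
    rcases hvals m c hc x with h | h
    · rw [h, Set.indicator_of_notMem]
      simp only [hE, Set.mem_preimage, Set.mem_singleton_iff, h]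
      norm_num
    · rw [h, Set.indicator_of_mem]
      · rfl
      · simpa [hE] using h
  -- set integral formula
  have hsetInt : ∀ m, ∀ c ∈ Set.Icc (0:ℝ) 1, ∀ t : Set X, MeasurableSet t →
      ∫ x in t, δ m c x ∂P = (P (E m c ∩ t)).toReal := by
    intro m c hc t ht
    rw [hind m c hc]
    rw [integral_indicator_one (hEmeas m c hc), measureReal_def, Measure.restrict_apply (hEmeas m c hc)]
  -- measure of E via D4
  have hPE : ∀ m ∈ M0, ∀ c ∈ Set.Icc (0:ℝ) 1, P (E m c) = ENNReal.ofReal c := by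
    intro m hm c hc
    have h1 : ∫ x, δ m c x ∂P = c := hD4 m hm c hc
    have h2 : ∫ x, δ m c x ∂P = (P (E m c)).toReal := by
      rw [hind m c hc, integral_indicator_one (hEmeas m c hc), measureReal_def]
    rw [h2] at h1
    have h3 := ENNReal.ofReal_toReal (measure_ne_top P (E m c))
    rw [h1] at h3
    exact h3.symm
  -- total integral of Tzero
  have htot : ∀ γ, 0 < γ → γ ≤ 1 → ∫ x, Tzero M0 A δ γ x ∂P = M0.card := by
    intro γ h0 h1
    have hAγ : ∀ m, A m γ ∈ Set.Icc (0:ℝ) 1 := fun m => hArange m γ ⟨h0.le, h1⟩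
    have hApos : ∀ m, 0 < A m γ := by
      intro m
      have := (hA2 m).2 ⟨le_rfl, zero_le_one⟩ ⟨h0.le, h1⟩ h0
      rwa [(hA1 m).1] at this
    have : ∫ x, Tzero M0 A δ γ x ∂P = ∑ m ∈ M0, ∫ x, δ m (A m γ) x / A m γ ∂P := by
      exact integral_finset_sum _ fun m _ => (hInt m (A m γ) (hAγ m)).div_const _
    rw [this]
    have : ∀ m ∈ M0, ∫ x, δ m (A m γ) x / A m γ ∂P = 1 := by
      intro m hm
      rw [integral_div, hD4 m hm (A m γ) (hAγ m), div_self (hApos m).ne']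
    rw [Finset.sum_congr rfl this, Finset.sum_const, nsmul_eq_mul, mul_one]
  -- main part

  intro α β hα hαβ hβ1
  have hβ0 : 0 < β := lt_of_lt_of_le hα hαβ
  have hα1 : α ≤ 1 := hαβ.trans hβ1
  have hα01 : α ∈ Set.Icc (0:ℝ) 1 := ⟨hα.le, hα1⟩
  have hβ01 : β ∈ Set.Icc (0:ℝ) 1 := ⟨hβ0.le, hβ1⟩
  have hγ01 : ∀ γ ∈ Set.Icc β 1, γ ∈ Set.Icc (0:ℝ) 1 := fun γ hγ => ⟨hβ0.le.trans hγ.1, hγ.2⟩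
  have hApos : ∀ m, ∀ γ ∈ Set.Icc (0:ℝ) 1, 0 < γ → 0 < A m γ := by
    intro m γ hγ h0
    have := (hA2 m).2 ⟨le_rfl, zero_le_one⟩ hγ h0
    rwa [(hA1 m).1] at this
  have hAmono : ∀ m, ∀ γ₁ ∈ Set.Icc (0:ℝ) 1, ∀ γ₂ ∈ Set.Icc (0:ℝ) 1, γ₁ ≤ γ₂ →
      A m γ₁ ≤ A m γ₂ := fun m γ₁ h1 γ₂ h2 h12 => ((hA2 m).2.monotoneOn) h1 h2 h12
  -- the filtration σ-algebra is a sub-σ-algebra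
  have hm_le : filt A δ β ≤ ‹MeasurableSpace X› := by
    refine iSup_le fun m => iSup₂_le fun γ hγ => ?_
    exact measurable_iff_comap_le.mp (hmeas m (A m γ) (hArange m γ (hγ01 γ hγ)))
  haveI : SigmaFinite (P.trim hm_le) := by
    haveI := isFiniteMeasure_trim (μ := P) hm_le
    infer_instance
  -- Tzero at β is measurable w.r.t. the filtration
  have hcomap_le_filt : ∀ γ ∈ Set.Icc β 1, ∀ m,
      MeasurableSpace.comap (δ m (A m γ)) Real.measurableSpace ≤ filt A δ β := by
    intro γ hγ m
    refine le_iSup_of_le m ?_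
    exact le_iSup₂ (f := fun (γ : ℝ) (_ : γ ∈ Set.Icc β 1) =>
      MeasurableSpace.comap (δ m (A m γ)) Real.measurableSpace) γ hγ
  have hgmeas : Measurable[filt A δ β] (Tzero M0 A δ β) := by
    have : Measurable[filt A δ β] (fun x => ∑ m ∈ M0, δ m (A m β) x / A m β) := by
      refine Finset.measurable_sum _ fun m _ => ?_
      have hb : Measurable[filt A δ β] (δ m (A m β)) :=
        (comap_measurable (δ m (A m β))).mono
          (hcomap_le_filt β ⟨le_rfl, hβ1⟩ m) le_rfl
      exact hb.div_const _
    exact this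
  have hgm : AEStronglyMeasurable[filt A δ β] (Tzero M0 A δ β) P :=
    StronglyMeasurable.aestronglyMeasurable hgmeas.stronglyMeasurable
  -- π-system generating the filtration
  set pisys : Set (Set X) := piiUnionInter
    (fun p : ι × ℝ => {s : Set X |
      MeasurableSet[MeasurableSpace.comap (δ p.1 (A p.1 p.2)) Real.measurableSpace] s})
    (Set.univ ×ˢ Set.Icc β 1) with hpisys
  have hpi : IsPiSystem pisys :=
    isPiSystem_piiUnionInter _ (fun (p : ι × ℝ) => @MeasurableSpace.isPiSystem_measurableSet X
      (MeasurableSpace.comap (δ p.1 (A p.1 p.2)) Real.measurableSpace)) _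
  have h_eq : filt A δ β = MeasurableSpace.generateFrom pisys := by
    have hgen := generateFrom_piiUnionInter_measurableSet
      (fun p : ι × ℝ => MeasurableSpace.comap (δ p.1 (A p.1 p.2)) Real.measurableSpace)
      (Set.univ ×ˢ Set.Icc β 1)
    rw [hpisys, hgen]
    apply le_antisymm
    · refine iSup_le fun m => iSup₂_le fun γ hγ => ?_
      exact le_iSup₂ (f := fun (p : ι × ℝ) (_ : p ∈ (Set.univ ×ˢ Set.Icc β 1 : Set (ι × ℝ))) =>
        MeasurableSpace.comap (δ p.1 (A p.1 p.2)) Real.measurableSpace) (m, γ) ⟨Set.mem_univ m, hγ⟩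
    · refine iSup₂_le fun p hp => le_iSup_of_le p.1 ?_
      exact le_iSup₂ (f := fun (γ : ℝ) (_ : γ ∈ Set.Icc β 1) =>
        MeasurableSpace.comap (δ p.1 (A p.1 γ)) Real.measurableSpace) p.2 hp.2
  -- the core: set-integral equality on the π-system
  have hbasic : ∀ t ∈ pisys,
      ∫ x in t, Tzero M0 A δ β x ∂P = ∫ x in t, Tzero M0 A δ α x ∂P := by
    rintro t ⟨F, hFS, f, hf, rfl⟩
    choose B hBmeas hBeq using fun p hp =>
      MeasurableSpace.measurableSet_comap.mp (hf p hp)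
    have hfmeas : ∀ p ∈ F, MeasurableSet (f p) := by
      intro p hp
      rw [← hBeq p hp]
      exact (hmeas p.1 (A p.1 p.2) (hArange p.1 p.2 (hγ01 _ (hFS hp).2))) (hBmeas p hp)
    have ht' : MeasurableSet (⋂ p ∈ F, f p) := F.measurableSet_biInter hfmeas
    have hsum : ∀ γ, 0 < γ → γ ≤ 1 → ∫ x in (⋂ p ∈ F, f p), Tzero M0 A δ γ x ∂P
        = ∑ m ∈ M0, ∫ x in (⋂ p ∈ F, f p), δ m (A m γ) x / A m γ ∂P := by
      intro γ h0 h1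
      have : ∫ x in (⋂ p ∈ F, f p), (∑ m ∈ M0, δ m (A m γ) x / A m γ) ∂P
          = ∑ m ∈ M0, ∫ x in (⋂ p ∈ F, f p), δ m (A m γ) x / A m γ ∂P :=
        integral_finset_sum _ fun m _ =>
          ((hInt m (A m γ) (hArange m γ ⟨h0.le, h1⟩)).div_const _).integrableOn
      exact this
    rw [hsum β hβ0 hβ1, hsum α hα hα1]
    refine Finset.sum_congr rfl fun m hm => ?_
    -- split the intersection into the m-part, the (M0 minus m)-part, and the M1-part
    set Fm := F.filter (fun p => p.1 = m) with hFm
    set F0 := F.filter (fun p => p.1 ≠ m ∧ p.1 ∈ M0) with hF0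
    set F1 := F.filter (fun p => p.1 ∉ M0) with hF1
    have hFmF : ∀ p ∈ Fm, p ∈ F := fun p hp => (Finset.mem_filter.mp hp).1
    set u := ⋂ p ∈ Fm, f p with hu_def
    set v₀ := ⋂ p ∈ F0, f p with hv0_def
    set v₁ := ⋂ p ∈ F1, f p with hv1_def
    have htu : (⋂ p ∈ F, f p) = u ∩ (v₀ ∩ v₁) := by
      ext x
      simp only [hu_def, hv0_def, hv1_def, Set.mem_iInter, Set.mem_inter_iff, hFm, hF0, hF1,
        Finset.mem_filter]
      constructor
      · exact fun h => ⟨fun p hp => h p hp.1, fun p hp => h p hp.1, fun p hp => h p hp.1⟩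
      · rintro ⟨h1, h2, h3⟩ p hp
        by_cases hpm : p.1 = m
        · exact h1 p ⟨hp, hpm⟩
        · by_cases hp0 : p.1 ∈ M0
          · exact h2 p ⟨hp, hpm, hp0⟩
          · exact h3 p ⟨hp, hp0⟩
    -- measurability of the pieces in the various σ-algebras
    have hfproc : ∀ p ∈ F, MeasurableSet[procSigma (δ p.1)] (f p) := by
      intro p hp
      rw [← hBeq p hp]
      exact mem_procSigma (hArange p.1 p.2 (hγ01 _ (hFS hp).2)) (hBmeas p hp)
    have hv0meas : MeasurableSet[⨆ n ∈ ({(⟨m, hm⟩ : {m // m ∈ M0})}ᶜ : Set {m // m ∈ M0}),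
        procSigma (δ (n : ι))] v₀ := by
      refine Finset.measurableSet_biInter _ fun p hp => ?_
      rw [hF0, Finset.mem_filter] at hp
      obtain ⟨hpF, hpm, hp0⟩ := hp
      have h2 : procSigma (δ p.1) ≤ ⨆ n ∈ ({(⟨m, hm⟩ : {m // m ∈ M0})}ᶜ : Set {m // m ∈ M0}),
          procSigma (δ (n : ι)) :=
        le_iSup₂ (f := fun (n : {m // m ∈ M0})
          (_ : n ∈ ({(⟨m, hm⟩ : {m // m ∈ M0})}ᶜ : Set {m // m ∈ M0})) => procSigma (δ (n : ι)))
          ⟨p.1, hp0⟩ (by simp [Subtype.ext_iff]; exact hpm)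
      exact h2 _ (hfproc p hpF)
    have hv0M0 : MeasurableSet[⨆ n ∈ M0, procSigma (δ n)] v₀ := by
      refine Finset.measurableSet_biInter _ fun p hp => ?_
      rw [hF0, Finset.mem_filter] at hp
      obtain ⟨hpF, hpm, hp0⟩ := hp
      have h2 : procSigma (δ p.1) ≤ ⨆ n ∈ M0, procSigma (δ n) :=
        le_iSup₂ (f := fun n (_ : n ∈ M0) => procSigma (δ n)) p.1 hp0
      exact h2 _ (hfproc p hpF)
    have hv1M1 : MeasurableSet[⨆ n ∈ M1, procSigma (δ n)] v₁ := by
      refine Finset.measurableSet_biInter _ fun p hp => ?_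
      rw [hF1, Finset.mem_filter] at hp
      obtain ⟨hpF, hp0⟩ := hp
      have hp1 : p.1 ∈ M1 := by
        have : p.1 ∈ M0 ∪ M1 := by rw [hpart]; exact Finset.mem_univ _
        rcases Finset.mem_union.mp this with h | h
        · exact absurd h hp0
        · exact h
      have h2 : procSigma (δ p.1) ≤ ⨆ n ∈ M1, procSigma (δ n) :=
        le_iSup₂ (f := fun n (_ : n ∈ M1) => procSigma (δ n)) p.1 hp1
      exact h2 _ (hfproc p hpF)
    -- independence
    have hindep1 : Indep (procSigma (δ m))
        (⨆ n ∈ ({(⟨m, hm⟩ : {m // m ∈ M0})}ᶜ : Set {m // m ∈ M0}), procSigma (δ (n : ι))) P := by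
      have h := indep_biSup_compl (fun n : {m // m ∈ M0} => procSigma_le (hmeas (n : ι)))
        hD3b {(⟨m, hm⟩ : {m // m ∈ M0})}
      simpa using h
    have hle0 : procSigma (δ m) ≤ ⨆ n ∈ M0, procSigma (δ n) :=
      le_iSup₂ (f := fun n (_ : n ∈ M0) => procSigma (δ n)) m hm
    have hmul1 : ∀ s : Set X, MeasurableSet[procSigma (δ m)] s → P (s ∩ v₀) = P s * P v₀ :=
      fun s hs => (hindep1.indepSet_of_measurableSet hs hv0meas).measure_inter_eq_mul
    have hmul2 : ∀ s : Set X, MeasurableSet[⨆ n ∈ M0, procSigma (δ n)] s →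
        P (s ∩ v₁) = P s * P v₁ :=
      fun s hs => (hD3a.indepSet_of_measurableSet hs hv1M1).measure_inter_eq_mul
    have hEproc : ∀ c ∈ Set.Icc (0:ℝ) 1, MeasurableSet[procSigma (δ m)] (E m c) :=
      fun c hc => mem_procSigma hc (measurableSet_singleton 1)
    -- the key measure computation
    have key : ∀ c ∈ Set.Icc (0:ℝ) 1, (∀ p ∈ Fm, c ≤ A m p.2) →
        P (E m c ∩ ⋂ p ∈ F, f p) =
          if (∀ p, ∀ hp : p ∈ Fm, (1:ℝ) ∈ B p (hFmF p hp)) then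
            ENNReal.ofReal c * (P v₀ * P v₁) else 0 := by
      intro c hc hcle
      have hae : ((E m c ∩ ⋂ p ∈ F, f p : Set X)) =ᵐ[P]
          (if (∀ p, ∀ hp : p ∈ Fm, (1:ℝ) ∈ B p (hFmF p hp)) then
            E m c ∩ (v₀ ∩ v₁) else (∅ : Set X) : Set X) := by
        rw [Filter.eventuallyEq_set]
        filter_upwards [hmono] with x hx
        have hkey : x ∈ E m c → ∀ p, ∀ hp : p ∈ Fm,
            (x ∈ f p ↔ (1:ℝ) ∈ B p (hFmF p hp)) := by
          intro hxE p hp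
          have hpF := hFmF p hp
          have hp1 : p.1 = m := (Finset.mem_filter.mp hp).2
          have hA2mem : A m p.2 ∈ Set.Icc (0:ℝ) 1 := hArange m p.2 (hγ01 _ (hFS hpF).2)
          have hδ1 : δ m (A m p.2) x = 1 :=
            hx m c hc _ hA2mem (hcle p hp) (by exact hxE)
          rw [← hBeq p hpF, Set.mem_preimage, hp1, hδ1]
        have hxu : x ∈ E m c → (x ∈ u ↔ (∀ p, ∀ hp : p ∈ Fm, (1:ℝ) ∈ B p (hFmF p hp))) := by
          intro hxE
          simp only [hu_def, Set.mem_iInter]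
          exact ⟨fun h p hp => (hkey hxE p hp).mp (h p hp),
            fun h p hp => (hkey hxE p hp).mpr (h p hp)⟩
        rw [htu]
        by_cases hcond : (∀ p, ∀ hp : p ∈ Fm, (1:ℝ) ∈ B p (hFmF p hp))
        · simp only [if_pos hcond, Set.mem_inter_iff]
          constructor
          · rintro ⟨h1, _, h2⟩; exact ⟨h1, h2⟩
          · rintro ⟨h1, h2⟩; exact ⟨h1, (hxu h1).mpr hcond, h2⟩
        · simp only [if_neg hcond, Set.mem_empty_iff_false, iff_false, Set.mem_inter_iff]
          rintro ⟨h1, h2, -⟩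
          exact hcond ((hxu h1).mp h2)
      rw [measure_congr hae]
      by_cases hcond : (∀ p, ∀ hp : p ∈ Fm, (1:ℝ) ∈ B p (hFmF p hp))
      · rw [if_pos hcond, if_pos hcond]
        have e1 : E m c ∩ (v₀ ∩ v₁) = (E m c ∩ v₀) ∩ v₁ := by rw [Set.inter_assoc]
        rw [e1, hmul2 _ ((hle0 _ (hEproc c hc)).inter hv0M0), hmul1 _ (hEproc c hc),
          hPE m hm c hc, mul_assoc]
      · rw [if_neg hcond, if_neg hcond, measure_empty]
    -- conclude the per-coordinate integral equality
    have hAα : A m α ∈ Set.Icc (0:ℝ) 1 := hArange m α hα01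
    have hAβ : A m β ∈ Set.Icc (0:ℝ) 1 := hArange m β hβ01
    have haPos : 0 < A m α := hApos m α hα01 hα
    have hbPos : 0 < A m β := hApos m β hβ01 hβ0
    have hcleα : ∀ p ∈ Fm, A m α ≤ A m p.2 := by
      intro p hp
      have h2 : p.2 ∈ Set.Icc β 1 := (hFS (hFmF p hp)).2
      exact hAmono m α hα01 p.2 (hγ01 _ h2) ((hαβ.trans h2.1))
    have hcleβ : ∀ p ∈ Fm, A m β ≤ A m p.2 := by
      intro p hp
      have h2 : p.2 ∈ Set.Icc β 1 := (hFS (hFmF p hp)).2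
      exact hAmono m β hβ01 p.2 (hγ01 _ h2) h2.1
    rw [integral_div, integral_div, hsetInt m _ hAβ _ ht', hsetInt m _ hAα _ ht',
      key _ hAβ hcleβ, key _ hAα hcleα]
    by_cases hcond : (∀ p, ∀ hp : p ∈ Fm, (1:ℝ) ∈ B p (hFmF p hp))
    · rw [if_pos hcond, if_pos hcond]
      simp only [ENNReal.toReal_mul, ENNReal.toReal_ofReal hbPos.le,
        ENNReal.toReal_ofReal haPos.le]
      rw [mul_comm (A m β) _, mul_comm (A m α) _, mul_div_assoc, mul_div_assoc,
        div_self hbPos.ne', div_self haPos.ne']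
    · rw [if_neg hcond, if_neg hcond]
      simp
  -- extend to the full σ-algebra by the π–λ theorem
  have hkeyInt : ∀ s : Set X, MeasurableSet[filt A δ β] s →
      ∫ x in s, Tzero M0 A δ β x ∂P = ∫ x in s, Tzero M0 A δ α x ∂P := by
    have hC := @MeasurableSpace.induction_on_inter X (filt A δ β)
      (fun s _ => ∫ x in s, Tzero M0 A δ β x ∂P = ∫ x in s, Tzero M0 A δ α x ∂P)
      pisys h_eq hpi (by simp) (fun t ht => hbasic t ht)
      (fun s hs' hC => by
        have hC' : ∫ x in s, Tzero M0 A δ β x ∂P = ∫ x in s, Tzero M0 A δ α x ∂P := hC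
        have hs'' : MeasurableSet s := hm_le s hs'
        have h1 := integral_add_compl hs'' (hTint β hβ0 hβ1)
        have h2 := integral_add_compl hs'' (hTint α hα hα1)
        have h3 : ∫ x, Tzero M0 A δ β x ∂P = ∫ x, Tzero M0 A δ α x ∂P := by
          rw [htot β hβ0 hβ1, htot α hα hα1]
        show ∫ x in sᶜ, Tzero M0 A δ β x ∂P = ∫ x in sᶜ, Tzero M0 A δ α x ∂P
        linarith)
      (fun g hdis hgm' hC => by
        show ∫ x in ⋃ i, g i, Tzero M0 A δ β x ∂P = ∫ x in ⋃ i, g i, Tzero M0 A δ α x ∂P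
        rw [integral_iUnion (fun i => hm_le _ (hgm' i)) hdis
            (hTint β hβ0 hβ1).integrableOn,
          integral_iUnion (fun i => hm_le _ (hgm' i)) hdis
            (hTint α hα hα1).integrableOn]
        exact tsum_congr hC)
    exact fun s hs => hC s hs
  exact (ae_eq_condExp_of_forall_setIntegral_eq hm_le (hTint α hα hα1)
    (fun s _ _ => (hTint β hβ0 hβ1).integrableOn)
    (fun s hs _ => hkeyInt s hs) hgm).symm

end
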